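/- Let (Ω, 𝓔, μ) be a complete σ-finite measure space, H a separable complex Hilbert space, and T : Ω → (H →L[ℂ] H) a random bounded operator, i.e. ω ↦ T ω f is measurable for every f ∈ H. Then for every open set U ⊆ ℂ the set {ω ∈ Ω | ∃ z ∈ U, ∃ f ∈ H, f ≠ 0 ∧ T ω f = z • f} (the event that the eigenvalue spectrum of T ω meets U) belongs to 𝓔. In other words, the eigenvalue spectrum of a random bounded operator is a random set. -/

import Mathlib

open MeasureTheory

section Auxiliary
open MeasurableSpace Set Filter Topology
open scoped ENNReal NNReal


lemma prod_eq_generateFrom' {Ω Y : Type*} [mΩ : MeasurableSpace Ω] [mY : MeasurableSpace Y] :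
    (Prod.instMeasurableSpace : MeasurableSpace (Ω × Y)) = generateFrom
      ({u | ∃ s, MeasurableSet s ∧ u = Prod.fst ⁻¹' s} ∪
       {u | ∃ t, MeasurableSet t ∧ u = Prod.snd ⁻¹' t}) := by
  apply le_antisymm
  · apply sup_le
    · rintro _ ⟨s, hs, rfl⟩
      exact measurableSet_generateFrom (Or.inl ⟨s, hs, rfl⟩)
    · rintro _ ⟨t, ht, rfl⟩
      exact measurableSet_generateFrom (Or.inr ⟨t, ht, rfl⟩)
  · apply generateFrom_le
    rintro u (⟨s, hs, rfl⟩ | ⟨t, ht, rfl⟩)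
    · exact measurable_fst hs
    · exact measurable_snd ht

/-- Every measurable set in a product `Ω × Y` is the preimage of a measurable set in
`(ℕ → Bool) × Y` under `(g, id)` for some measurable `g : Ω → ℕ → Bool`. -/
lemma exists_cantor_repr {Ω Y : Type*} [MeasurableSpace Ω] [MeasurableSpace Y]
    {A : Set (Ω × Y)} (hA : MeasurableSet A) :
    ∃ (g : Ω → (ℕ → Bool)) (B : Set ((ℕ → Bool) × Y)), Measurable g ∧ MeasurableSet B ∧
      A = (fun p : Ω × Y => (g p.1, p.2)) ⁻¹' B := by
  have hA' : MeasurableSet[generateFrom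
      ({u | ∃ s, MeasurableSet s ∧ u = Prod.fst ⁻¹' s} ∪
       {u | ∃ t, MeasurableSet t ∧ u = Prod.snd ⁻¹' t})] A := by
    rw [← prod_eq_generateFrom']; exact hA
  clear hA
  induction hA' with
  | basic u hu =>
    rcases hu with ⟨s, hs, rfl⟩ | ⟨t, ht, rfl⟩
    · classical
      refine ⟨fun ω _ => decide (ω ∈ s), {p | p.1 0 = true}, ?_, ?_, ?_⟩
      · rw [measurable_pi_iff]
        intro _
        refine measurable_to_bool ?_
        convert hs using 1
        ext ω; simp
      · have h1 : Measurable fun p : (ℕ → Bool) × Y => p.1 0 :=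
          (measurable_pi_apply 0).comp measurable_fst
        exact h1 (measurableSet_singleton true)
      · ext ⟨ω, y⟩; simp
    · exact ⟨fun _ _ => false, Prod.snd ⁻¹' t, measurable_const, measurable_snd ht, rfl⟩
  | empty => exact ⟨fun _ _ => false, ∅, measurable_const, MeasurableSet.empty, by simp⟩
  | compl u _ ih =>
    obtain ⟨g, B, hg, hB, rfl⟩ := ih
    exact ⟨g, Bᶜ, hg, hB.compl, by simp⟩
  | iUnion s _ ih =>
    choose g B hg hB hrepr using ih
    refine ⟨fun ω k => g (Nat.unpair k).1 ω (Nat.unpair k).2,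
      ⋃ n, (fun p : (ℕ → Bool) × Y => (fun i => p.1 (Nat.pair n i), p.2)) ⁻¹' B n, ?_, ?_, ?_⟩
    · rw [measurable_pi_iff]
      intro k
      exact (measurable_pi_apply _).comp (hg _)
    · refine MeasurableSet.iUnion fun n => ?_
      refine (Measurable.prodMk ?_ measurable_snd) (hB n)
      rw [measurable_pi_iff]
      exact fun i => (measurable_pi_apply _).comp measurable_fst
    · ext ⟨ω, y⟩
      simp only [Set.mem_iUnion, Set.mem_preimage, hrepr]
      refine exists_congr fun n => ?_
      have : (fun i => g (Nat.unpair (Nat.pair n i)).1 ω (Nat.unpair (Nat.pair n i)).2) = g n ω := by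
        funext i; rw [Nat.unpair_pair]
      rw [this]

/-- Geometric slack sum bound. -/
lemma slack_sum_le {ε : ℝ≥0∞} (m : ℕ) : ∑ i ∈ Finset.range m, ε / 2 ^ (i + 1) ≤ ε := by
  have h1 : ∀ i : ℕ, ε / 2 ^ (i + 1) = ε * 2⁻¹ ^ (i + 1) := by
    intro i
    rw [ENNReal.div_eq_inv_mul, mul_comm, ENNReal.inv_pow]
  calc ∑ i ∈ Finset.range m, ε / 2 ^ (i + 1)
      = ε * ∑ i ∈ Finset.range m, 2⁻¹ ^ (i + 1) := by
        rw [Finset.mul_sum]; exact Finset.sum_congr rfl fun i _ => h1 i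
    _ ≤ ε * ∑' i : ℕ, 2⁻¹ ^ (i + 1) := by
        gcongr
        exact ENNReal.sum_le_tsum _
    _ = ε * 1 := by
        rw [ENNReal.tsum_geometric_add_one, ENNReal.one_sub_inv_two,
          ENNReal.mul_inv_cancel (by norm_num) (by norm_num)]
    _ = ε := mul_one ε

/-- Choquet-type inner approximation by compacts of an analytic set given as a continuous
image of Baire space, for a finite Borel measure on a metric space. -/
lemma exists_isCompact_measure_le {γ : Type*} [MetricSpace γ] [MeasurableSpace γ] [BorelSpace γ]
    (f : (ℕ → ℕ) → γ) (hf : Continuous f) (ν : Measure γ) [IsFiniteMeasure ν]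
    {ε : ℝ≥0∞} (hε : ε ≠ 0) :
    ∃ K, IsCompact K ∧ K ⊆ Set.range f ∧ ν (Set.range f) ≤ ν K + ε := by
  by_cases hεtop : ε = ⊤
  · exact ⟨∅, isCompact_empty, Set.empty_subset _, by simp [hεtop]⟩
  -- step: enlarge one more coordinate bound losing at most ε/2^(m+1)
  have step : ∀ (E : Set (ℕ → ℕ)) (m : ℕ),
      ∃ j : ℕ, ν (f '' E) ≤ ν (f '' (E ∩ {x | x m ≤ j})) + ε / 2 ^ (m + 1) := by
    intro E m
    have hmono : Monotone fun j : ℕ => f '' (E ∩ {x | x m ≤ j}) := by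
      intro a b hab
      exact Set.image_mono (Set.inter_subset_inter_right E fun x hx => le_trans hx hab)
    have hEun : ⋃ j : ℕ, (E ∩ {x | x m ≤ j}) = E := by
      ext x
      simp only [Set.mem_iUnion, Set.mem_inter_iff, Set.mem_setOf_eq]
      exact ⟨fun ⟨j, hj, _⟩ => hj, fun hx => ⟨x m, hx, le_refl _⟩⟩
    have hunion : ⋃ j : ℕ, f '' (E ∩ {x | x m ≤ j}) = f '' E := by
      rw [← Set.image_iUnion, hEun]
    have hsup : ⨆ j : ℕ, ν (f '' (E ∩ {x | x m ≤ j})) = ν (f '' E) := by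
      rw [← hmono.measure_iUnion, hunion]
    by_cases h0 : ν (f '' E) = 0
    · exact ⟨0, by simp [h0]⟩
    · have hδ : ε / 2 ^ (m + 1) ≠ 0 :=
        ENNReal.div_ne_zero.mpr ⟨hε, by simp⟩
      have htop : ν (f '' E) ≠ ⊤ := measure_ne_top ν _
      by_contra hcon
      push_neg at hcon
      have hle : ∀ j : ℕ, ν (f '' (E ∩ {x | x m ≤ j})) ≤ ν (f '' E) - ε / 2 ^ (m + 1) := by
        intro j
        exact ENNReal.le_sub_of_add_le_right (by simp [ENNReal.div_eq_top, hεtop]) (hcon j).le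
      have : ν (f '' E) ≤ ν (f '' E) - ε / 2 ^ (m + 1) := by
        have h2 := iSup_le hle
        rwa [hsup] at h2
      exact absurd (this.trans_lt (ENNReal.sub_lt_self htop h0 hδ)) (lt_irrefl _)
  -- recursively choose coordinate bounds
  obtain ⟨b, hb0, hbs⟩ : ∃ b : ℕ → ℕ → ℕ, b 0 = (fun _ => 0) ∧ ∀ m, b (m + 1) =
      Function.update (b m) m ((step {x | ∀ i < m, x i ≤ b m i} m).choose) :=
    ⟨fun m => Nat.rec (motive := fun _ => ℕ → ℕ) (fun _ => 0)
      (fun m bm => Function.update bm m ((step {x | ∀ i < m, x i ≤ bm i} m).choose)) m,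
      rfl, fun m => rfl⟩
  set N : ℕ → ℕ := fun m => b (m + 1) m with hN
  have hagree : ∀ m i, i < m → b m i = N i := by
    intro m
    induction m with
    | zero => intro i hi; omega
    | succ m ih =>
      intro i hi
      rcases Nat.lt_succ_iff_lt_or_eq.mp hi with hi' | rfl
      · rw [hbs m, Function.update_of_ne (Nat.ne_of_lt hi'), ih i hi']
      · rfl
  set T : ℕ → Set (ℕ → ℕ) := fun m => {x | ∀ i < m, x i ≤ N i} with hT
  have hTb : ∀ m, {x : ℕ → ℕ | ∀ i < m, x i ≤ b m i} = T m := by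
    intro m
    ext x
    exact forall₂_congr fun i hi => by rw [hagree m i hi]
  have hstage : ∀ m, ν (f '' T m) ≤ ν (f '' T (m + 1)) + ε / 2 ^ (m + 1) := by
    intro m
    obtain ⟨j, hjdef⟩ : ∃ j, (step {x | ∀ i < m, x i ≤ b m i} m).choose = j := ⟨_, rfl⟩
    have hspec := (step {x | ∀ i < m, x i ≤ b m i} m).choose_spec
    rw [hjdef, hTb m] at hspec
    have hinter : T m ∩ {x | x m ≤ j} = T (m + 1) := by
      ext x
      simp only [hT, Set.mem_inter_iff, Set.mem_setOf_eq]
      constructor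
      · rintro ⟨h1, h2⟩ i hi
        rcases Nat.lt_succ_iff_lt_or_eq.mp hi with hi' | rfl
        · exact h1 i hi'
        · show x i ≤ b (i + 1) i
          rw [hbs i, Function.update_self, hjdef]; exact h2
      · intro h
        refine ⟨fun i hi => h i (hi.trans (Nat.lt_succ_self m)), ?_⟩
        have h2 : x m ≤ b (m + 1) m := h m (Nat.lt_succ_self m)
        rwa [hbs m, Function.update_self, hjdef] at h2
    rwa [hinter] at hspec
  have htel : ∀ m, ν (Set.range f) ≤ ν (f '' T m) + ∑ i ∈ Finset.range m, ε / 2 ^ (i + 1) := by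
    intro m
    induction m with
    | zero =>
      have : T 0 = Set.univ := by ext x; simp [hT]
      simp [this, Set.image_univ]
    | succ m ih =>
      calc ν (Set.range f) ≤ ν (f '' T m) + ∑ i ∈ Finset.range m, ε / 2 ^ (i + 1) := ih
        _ ≤ (ν (f '' T (m + 1)) + ε / 2 ^ (m + 1)) + ∑ i ∈ Finset.range m, ε / 2 ^ (i + 1) := by
            gcongr; exact hstage m
        _ = ν (f '' T (m + 1)) + ∑ i ∈ Finset.range (m + 1), ε / 2 ^ (i + 1) := by
            rw [Finset.sum_range_succ]; ring
  have hbound : ∀ m, ν (Set.range f) ≤ ν (f '' T m) + ε := fun m =>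
    (htel m).trans (by gcongr; exact slack_sum_le m)
  -- the compact set
  set C : Set (ℕ → ℕ) := Set.univ.pi fun i => Set.Iic (N i) with hC
  have hCcomp : IsCompact C := isCompact_univ_pi fun i => (Set.finite_Iic (N i)).isCompact
  set K : Set γ := f '' C with hK
  have hKcomp : IsCompact K := hCcomp.image hf
  refine ⟨K, hKcomp, (Set.image_subset_range f C), ?_⟩
  -- every open W ⊇ K contains some f '' T m
  have hopen : ∀ W : Set γ, IsOpen W → K ⊆ W → ∃ m, f '' T m ⊆ W := by
    intro W hW hKW
    by_contra hcon
    push_neg at hcon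
    have hcon' : ∀ m, ∃ x, x ∈ T m ∧ f x ∉ W := by
      intro m
      rcases Set.not_subset.mp (hcon m) with ⟨a, ⟨x, hxT, rfl⟩, haW⟩
      exact ⟨x, hxT, haW⟩
    choose x hxT hxW using hcon'
    -- truncate into the compact set C and extract a convergent subsequence
    set z : ℕ → (ℕ → ℕ) := fun m i => min (x m i) (N i) with hz
    have hzC : ∀ m, z m ∈ C := by
      intro m
      rw [hC, Set.mem_univ_pi]
      intro i
      exact Set.mem_Iic.mpr (min_le_right _ _)
    obtain ⟨a, haC, φ, hφ, hza⟩ := hCcomp.tendsto_subseq hzC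
    have hxa : Filter.Tendsto (fun k => x (φ k)) Filter.atTop (nhds a) := by
      rw [tendsto_pi_nhds]
      intro i
      have hzi : Filter.Tendsto (fun k => z (φ k) i) Filter.atTop (nhds (a i)) :=
        (continuous_apply i).continuousAt.tendsto.comp hza
      refine hzi.congr' ?_
      filter_upwards [Filter.eventually_ge_atTop (i + 1)] with k hk
      have hik : i < φ k := Nat.lt_of_succ_le (hk.trans hφ.le_apply)
      have : x (φ k) i ≤ N i := hxT (φ k) i hik
      simp [hz, min_eq_left this]
    have hfa : Filter.Tendsto (fun k => f (x (φ k))) Filter.atTop (nhds (f a)) :=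
      (hf.continuousAt.tendsto).comp hxa
    have hfaK : f a ∈ K := Set.mem_image_of_mem f haC
    have hWnhds : W ∈ nhds (f a) := hW.mem_nhds (hKW hfaK)
    have hev : ∀ᶠ k in Filter.atTop, f (x (φ k)) ∈ W := hfa hWnhds
    rcases hev.exists with ⟨k, hk⟩
    exact hxW (φ k) hk
  -- conclude via outer regularity
  have hfinal : ∀ W : Set γ, K ⊆ W → IsOpen W → ν (Set.range f) ≤ ν W + ε := by
    intro W hKW hW
    obtain ⟨m, hm⟩ := hopen W hW hKW
    exact (hbound m).trans (add_le_add_left (measure_mono hm) ε)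
  refine ENNReal.le_of_forall_pos_le_add fun δ hδ hfin => ?_
  obtain ⟨W, hKW, hW, hWlt⟩ := Set.exists_isOpen_lt_of_lt K (ν K + δ)
    (ENNReal.lt_add_right (measure_ne_top ν K) (by exact_mod_cast hδ.ne'))
  calc ν (Set.range f) ≤ ν W + ε := hfinal W hKW hW
    _ ≤ (ν K + δ) + ε := add_le_add_left hWlt.le ε
    _ = (ν K + ε) + δ := by ring

/-- Capacitability: an analytic set in a Polish space is sandwiched between Borel sets of
equal finite measure. -/
lemma analyticSet_squeeze {γ : Type*} [TopologicalSpace γ] [PolishSpace γ] [MeasurableSpace γ]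
    [BorelSpace γ] {S : Set γ} (hS : MeasureTheory.AnalyticSet S) (ν : Measure γ)
    [IsFiniteMeasure ν] :
    ∃ B₁ B₂ : Set γ, MeasurableSet B₁ ∧ MeasurableSet B₂ ∧ B₁ ⊆ S ∧ S ⊆ B₂ ∧
      ν (B₂ \ B₁) = 0 := by
  rw [MeasureTheory.AnalyticSet] at hS
  rcases hS with rfl | ⟨f, hf, rfl⟩
  · exact ⟨∅, ∅, MeasurableSet.empty, MeasurableSet.empty, subset_rfl, subset_rfl, by simp⟩
  letI := TopologicalSpace.upgradeIsCompletelyMetrizable γ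
  have hK : ∀ n : ℕ, ∃ K, IsCompact K ∧ K ⊆ Set.range f ∧
      ν (Set.range f) ≤ ν K + (n : ℝ≥0∞)⁻¹ := by
    intro n
    exact exists_isCompact_measure_le f hf ν (by simp)
  choose K hKc hKs hKle using hK
  refine ⟨⋃ n, K n, toMeasurable ν (Set.range f),
    MeasurableSet.iUnion fun n => (hKc n).isClosed.measurableSet,
    measurableSet_toMeasurable ν _, Set.iUnion_subset hKs, subset_toMeasurable ν _, ?_⟩
  have hB1 : ν (Set.range f) ≤ ν (⋃ n, K n) := by
    refine ENNReal.le_of_forall_pos_le_add fun δ hδ hfin => ?_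
    obtain ⟨n, hn⟩ := ENNReal.exists_inv_nat_lt (ne_of_gt (by exact_mod_cast hδ : (0:ℝ≥0∞) < δ))
    calc ν (Set.range f) ≤ ν (K n) + (n : ℝ≥0∞)⁻¹ := hKle n
      _ ≤ ν (⋃ n, K n) + δ := add_le_add (measure_mono (Set.subset_iUnion K n)) hn.le
  rw [measure_diff (Set.iUnion_subset hKs |>.trans (subset_toMeasurable ν _))
    ((MeasurableSet.iUnion fun n => (hKc n).isClosed.measurableSet).nullMeasurableSet)
    (measure_ne_top ν _)]
  rw [measure_toMeasurable]
  exact tsub_eq_zero_of_le hB1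

/-- Preimages of analytic sets under measurable maps are measurable, for a complete σ-finite
measure. -/
lemma measurableSet_preimage_analyticSet {Ω : Type*} [MeasurableSpace Ω] (μ : Measure Ω)
    [SigmaFinite μ] (hμ : μ.IsComplete)
    {γ : Type*} [TopologicalSpace γ] [PolishSpace γ] [MeasurableSpace γ] [BorelSpace γ]
    {g : Ω → γ} (hg : Measurable g) {S : Set γ} (hS : MeasureTheory.AnalyticSet S) :
    MeasurableSet (g ⁻¹' S) := by
  set s : ℕ → Set Ω := spanningSets μ with hs
  have hsm : ∀ n, MeasurableSet (s n) := fun n => measurableSet_spanningSets μ n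
  have hν : ∀ n : ℕ, IsFiniteMeasure ((μ.restrict (s n)).map g) := by
    intro n
    refine ⟨?_⟩
    rw [Measure.map_apply hg MeasurableSet.univ, Set.preimage_univ,
      Measure.restrict_apply_univ]
    exact measure_spanningSets_lt_top μ n
  have hBn : ∀ n : ℕ, ∃ B₁ B₂ : Set γ, MeasurableSet B₁ ∧ MeasurableSet B₂ ∧ B₁ ⊆ S ∧
      S ⊆ B₂ ∧ ((μ.restrict (s n)).map g) (B₂ \ B₁) = 0 := by
    intro n
    have := hν n
    exact analyticSet_squeeze hS _
  choose B₁ B₂ hB₁ hB₂ hB₁S hSB₂ hnull using hBn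
  set C₁ : Set γ := ⋃ n, B₁ n with hC₁
  set C₂ : Set γ := ⋂ n, B₂ n with hC₂
  have hnull2 : μ (g ⁻¹' (C₂ \ C₁)) = 0 := by
    have hcover : g ⁻¹' (C₂ \ C₁) = ⋃ n, (g ⁻¹' (C₂ \ C₁)) ∩ s n := by
      rw [← Set.inter_iUnion, iUnion_spanningSets, Set.inter_univ]
    rw [hcover]
    refine measure_iUnion_null fun n => ?_
    have h1 : μ ((g ⁻¹' (C₂ \ C₁)) ∩ s n) ≤ ((μ.restrict (s n)).map g) (B₂ n \ B₁ n) := by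
      rw [Measure.map_apply hg ((hB₂ n).diff (hB₁ n)), Measure.restrict_apply' (hsm n)]
      refine measure_mono (Set.inter_subset_inter_left _ ?_)
      refine Set.preimage_mono ?_
      intro y hy
      exact ⟨Set.iInter_subset _ n hy.1, fun h => hy.2 (Set.subset_iUnion B₁ n h)⟩
    exact le_antisymm (h1.trans_eq (hnull n)) (zero_le)
  have hsub : g ⁻¹' S \ g ⁻¹' C₁ ⊆ g ⁻¹' (C₂ \ C₁) := by
    intro ω hω
    exact ⟨Set.mem_iInter.mpr fun n => hSB₂ n hω.1, hω.2⟩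
  have hdiffnull : μ (g ⁻¹' S \ g ⁻¹' C₁) = 0 :=
    le_antisymm ((measure_mono hsub).trans_eq hnull2) (zero_le)
  have : g ⁻¹' S = g ⁻¹' C₁ ∪ (g ⁻¹' S \ g ⁻¹' C₁) := by
    rw [Set.union_diff_self]
    rw [Set.union_eq_self_of_subset_left (Set.preimage_mono (Set.iUnion_subset hB₁S))]
  rw [this]
  exact (hg (MeasurableSet.iUnion hB₁)).union (hμ.out _ hdiffnull)

end Auxiliary

/-- The eigenvalue spectrum of a random bounded operator is a random set:
for a complete σ-finite measure space `(Ω, 𝓔, μ)`, a separable complex Hilbert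
space `H`, and a random bounded operator `T` (i.e. `ω ↦ T ω f` is measurable
for every `f`), the event that the eigenvalue spectrum of `T ω` meets a given
open set `U ⊆ ℂ` is measurable. -/
theorem eigenvalue_spectrum_is_random_set
    {Ω : Type*} [MeasurableSpace Ω] (μ : Measure Ω) [SigmaFinite μ]
    (hμ : μ.IsComplete)
    {H : Type*} [NormedAddCommGroup H] [InnerProductSpace ℂ H] [CompleteSpace H]
    [SecondCountableTopology H] [MeasurableSpace H] [BorelSpace H]
    (T : Ω → (H →L[ℂ] H)) (hT : ∀ f : H, Measurable fun ω => T ω f)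
    (U : Set ℂ) (hU : IsOpen U) :
    MeasurableSet {ω : Ω | ∃ z ∈ U, ∃ f : H, f ≠ 0 ∧ T ω f = z • f} := by
  classical
  set Y := ℂ × H with hY
  -- the joint eigen-equation set
  set A : Set (Ω × Y) := {p | p.2.1 ∈ U ∧ p.2.2 ≠ 0 ∧ T p.1 p.2.2 = p.2.1 • p.2.2} with hA
  have hTmeas : Measurable fun q : H × Ω => T q.2 q.1 :=
    measurable_uncurry_of_continuous_of_measurable (fun ω => (T ω).continuous) hT
  have hAmeas : MeasurableSet A := by
    refine MeasurableSet.inter ?_ (MeasurableSet.inter ?_ ?_)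
    · exact (measurable_fst.comp measurable_snd) hU.measurableSet
    · exact ((measurable_snd.comp measurable_snd) (measurableSet_singleton (0 : H))).compl
    · have h1 : Measurable fun p : Ω × Y => T p.1 p.2.2 :=
        hTmeas.comp ((measurable_snd.comp measurable_snd).prodMk measurable_fst)
      have h2 : Measurable fun p : Ω × Y => p.2.1 • p.2.2 := by
        have hc : Continuous fun y : Y => y.1 • y.2 := continuous_fst.smul continuous_snd
        exact (hc.measurable).comp measurable_snd
      exact measurableSet_eq_fun h1 h2
  obtain ⟨g, B, hg, hB, hrepr⟩ := exists_cantor_repr hAmeas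
  have hproj : {ω : Ω | ∃ z ∈ U, ∃ f : H, f ≠ 0 ∧ T ω f = z • f} = g ⁻¹' (Prod.fst '' B) := by
    ext ω
    simp only [Set.mem_setOf_eq, Set.mem_preimage]
    constructor
    · rintro ⟨z, hz, f, hf, hfz⟩
      have : (ω, (z, f)) ∈ A := ⟨hz, hf, hfz⟩
      rw [hrepr] at this
      exact ⟨(g ω, (z, f)), this, rfl⟩
    · rintro ⟨⟨x, y⟩, hxy, hx⟩
      have : (ω, y) ∈ A := by
        rw [hrepr]
        simpa [← hx] using hxy
      exact ⟨y.1, this.1, y.2, this.2.1, this.2.2⟩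
  rw [hproj]
  haveI : PolishSpace Bool := inferInstance
  have hanB : MeasureTheory.AnalyticSet (Prod.fst '' B) :=
    (hB.analyticSet).image_of_continuous continuous_fst
  exact measurableSet_preimage_analyticSet μ hμ hg hanB
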